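/- Assume every smart contract SC_e in an atomic cross-chain transaction is redeemed only if SC_w's state is RD_auth at some point and refunded only if SC_w's state is RF_auth at some point, and SC_w's state machine only permits transitions P → RD_auth and P → RF_auth with no fork (i.e., the states of SC_w form a single linearly ordered trace). Then it cannot happen that one smart contract in the transaction is redeemed while another is refunded (all-or-nothing atomicity). -/

import Mathlib

/-- States of the coordination smart contract `SC_w`. -/
inductive WState
  | P | RD_auth | RF_auth
  deriving DecidableEq

/-- Transition relation of `SC_w`: only `P → RD_auth` and `P → RF_auth`. -/
def WTrans : WState → WState → Prop :=
  fun s s' => s = WState.P ∧ (s' = WState.RD_auth ∨ s' = WState.RF_auth)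

/-- Final states of an individual asset-transfer smart contract. -/
inductive CState
  | Published | Redeemed | Refunded
  deriving DecidableEq

/-- All-or-nothing atomicity: if each contract is redeemed only when `RD_auth`
occurs in `SC_w`'s (linear, fork-free) trace and refunded only when `RF_auth`
occurs in the trace, then no contract is redeemed while another is refunded. -/
theorem atomicity_no_fork
    (Edge : Type) (status : Edge → CState)
    (tr : List WState) (h0 : tr.head? = some WState.P)
    (hchain : List.Chain' WTrans tr)
    (hredeem : ∀ e, status e = CState.Redeemed → WState.RD_auth ∈ tr)
    (hrefund : ∀ e, status e = CState.Refunded → WState.RF_auth ∈ tr) :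
    ¬ ∃ e₁ e₂, status e₁ = CState.Redeemed ∧ status e₂ = CState.Refunded := by
  rintro ⟨e₁, e₂, h₁, h₂⟩
  have hrd := hredeem e₁ h₁
  have hrf := hrefund e₂ h₂
  match tr, h0, hchain with
  | [WState.P], _, _ =>
      simp at hrd hrf
  | WState.P :: s :: rest, _, hc =>
      simp only [List.Chain', List.isChain_cons_cons] at hc
      obtain ⟨⟨_, hs⟩, hc'⟩ := hc
      have hrest : rest = [] := by
        cases rest with
        | nil => rfl
        | cons t ts =>
          rw [List.isChain_cons_cons] at hc'
          rcases hc'.1 with ⟨hsP, _⟩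
          rcases hs with h | h <;> simp [h] at hsP
      subst hrest
      rcases hs with h | h <;> subst h <;> simp at hrd hrf
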